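/- Let $J_i \subseteq \mathbb{N}$ be a sequence of sets such that $\lim_{i \to \infty} \limsup_{k \to \infty} \frac{1}{k} \#(J_i \cap [0,k]) = 0$. Then there exist a set $J \subseteq \mathbb{N}$ of density zero and increasing sequences $\{m_i\}$ and $\{l_i\}$ with $m_0 = 0$ such that for every $i \geq 1$, $J \cap [m_{i-1}, m_i) = J_{l_i} \cap [m_{i-1}, m_i)$. Moreover, if each $J_i$ has density zero one can take $l_i = i$ for all $i$, and given any sequence of infinite sets $R_i \subseteq \mathbb{N}$ one can choose $m_i \in R_i$. -/

import Mathlib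

open Filter
open scoped Classical

private lemma exists_block {m : ℕ → ℕ} (hm : StrictMono m) (h0 : m 0 = 0) (n : ℕ) :
    ∃ j, m j ≤ n ∧ n < m (j + 1) := by
  induction n with
  | zero => exact ⟨0, by omega, by have : m 0 < m (0 + 1) := hm (by omega); omega⟩
  | succ n ih =>
    obtain ⟨j, hj1, hj2⟩ := ih
    rcases lt_or_ge (n + 1) (m (j + 1)) with hlt | hle
    · exact ⟨j, by omega, hlt⟩
    · exact ⟨j + 1, hle, by have : m (j + 1) < m (j + 1 + 1) := hm (by omega); omega⟩

private lemma block_unique {m : ℕ → ℕ} (hm : StrictMono m) {j k x : ℕ}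
    (h1 : m j ≤ x) (h2 : x < m (j + 1)) (h3 : m k ≤ x) (h4 : x < m (k + 1)) : j = k := by
  rcases lt_trichotomy j k with hlt | heq | hgt
  · have := hm.le_iff_le.mpr (show j + 1 ≤ k from hlt); omega
  · exact heq
  · have := hm.le_iff_le.mpr (show k + 1 ≤ j from hgt); omega

private lemma master_glue (J : ℕ → Set ℕ)
    (hJ : ∀ i : ℕ, ∃ T : ℕ, ∀ n ≥ T,
      (((Finset.range n).filter (fun j => j ∈ J i)).card : ℝ) ≤ (1 / 2) ^ i * n)
    (R : ℕ → Set ℕ) (hR : ∀ i, (R i).Infinite) :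
    ∃ (Js : Set ℕ) (m : ℕ → ℕ),
      Tendsto (fun n => (((Finset.range n).filter (fun j => j ∈ Js)).card : ℝ) / n)
        atTop (nhds 0) ∧
      m 0 = 0 ∧ StrictMono m ∧
      (∀ i ≥ 1, m i ∈ R i) ∧
      (∀ i ≥ 1, Js ∩ Set.Ico (m (i - 1)) (m i) = J i ∩ Set.Ico (m (i - 1)) (m i)) := by
  choose T hT using hJ
  set S : ℕ → ℕ := fun i => ∑ j ∈ Finset.range (i + 1), T j with hS
  have hTS : ∀ j i, j ≤ i → T j ≤ S i := by
    intro j i hji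
    exact Finset.single_le_sum (fun _ _ => Nat.zero_le _) (Finset.mem_range.mpr (by omega))
  set m : ℕ → ℕ := fun i => Nat.rec 0
    (fun i mi => Classical.choose ((hR (i + 1)).exists_gt (mi + S (i + 2) + 2 ^ (i + 1) * mi))) i
    with hmdef
  have hm0 : m 0 = 0 := rfl
  have hmspec : ∀ i, m (i + 1) ∈ R (i + 1) ∧
      m i + S (i + 2) + 2 ^ (i + 1) * m i < m (i + 1) := by
    intro i
    exact Classical.choose_spec ((hR (i + 1)).exists_gt (m i + S (i + 2) + 2 ^ (i + 1) * m i))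
  have hmlt : ∀ i, m i < m (i + 1) := fun i => by have := (hmspec i).2; omega
  have hmmono : StrictMono m := strictMono_nat_of_lt_succ hmlt
  have hmS : ∀ i, S (i + 2) ≤ m (i + 1) := fun i => by have := (hmspec i).2; omega
  have hmpow : ∀ i, 2 ^ (i + 1) * m i ≤ m (i + 1) := fun i => by have := (hmspec i).2; omega
  set Js : Set ℕ := ⋃ i, J (i + 1) ∩ Set.Ico (m i) (m (i + 1)) with hJsdef
  have hmemJs : ∀ x, x ∈ Js ↔ ∃ i, x ∈ J (i + 1) ∧ m i ≤ x ∧ x < m (i + 1) := by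
    intro x
    simp [hJsdef, Set.mem_iUnion, Set.mem_Ico, and_assoc]
  -- E1
  have E1 : ∀ x j, x ∈ Js → m j ≤ x → x < m (j + 1) → x ∈ J (j + 1) := by
    intro x j hx h1 h2
    obtain ⟨t, hxt, ht1, ht2⟩ := (hmemJs x).mp hx
    have := block_unique hmmono ht1 ht2 h1 h2
    rwa [← this]
  -- E2 : counting bound
  have E2 : ∀ j n, n ≤ m (j + 1) →
      ((Finset.range n).filter (fun x => x ∈ Js)).card ≤
        ((Finset.range (m j)).filter (fun x => x ∈ Js)).card +
        ((Finset.range n).filter (fun x => x ∈ J (j + 1))).card := by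
    intro j n hn
    calc ((Finset.range n).filter (fun x => x ∈ Js)).card
        ≤ (((Finset.range (m j)).filter (fun x => x ∈ Js)) ∪
           ((Finset.range n).filter (fun x => x ∈ J (j + 1)))).card := by
          apply Finset.card_le_card
          intro x hx
          simp only [Finset.mem_filter, Finset.mem_range] at hx
          rcases lt_or_ge x (m j) with hlt | hge
          · exact Finset.mem_union_left _ (Finset.mem_filter.mpr ⟨Finset.mem_range.mpr hlt, hx.2⟩)
          · refine Finset.mem_union_right _ (Finset.mem_filter.mpr ⟨Finset.mem_range.mpr hx.1, ?_⟩)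
            exact E1 x j hx.2 hge (lt_of_lt_of_le hx.1 hn)
      _ ≤ _ := Finset.card_union_le _ _
  -- notation for real counts
  set D : ℕ → ℝ := fun n => (((Finset.range n).filter (fun x => x ∈ Js)).card : ℝ) with hD
  set C : ℕ → ℕ → ℝ := fun i n => (((Finset.range n).filter (fun x => x ∈ J i)).card : ℝ) with hC
  have hCbound : ∀ i n, T i ≤ n → C i n ≤ (1 / 2) ^ i * n := fun i n hn => hT i n hn
  have hmhalf : ∀ j, (m j : ℝ) ≤ (1 / 2) ^ (j + 1) * m (j + 1) := by
    intro j
    have h2 : ((2 : ℝ) ^ (j + 1) * m j) ≤ m (j + 1) := by exact_mod_cast hmpow j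
    have : (m j : ℝ) = (1 / 2) ^ (j + 1) * ((2 : ℝ) ^ (j + 1) * m j) := by
      rw [← mul_assoc, div_pow, one_pow, div_mul_cancel₀]
      · ring
      · positivity
    rw [this]
    apply mul_le_mul_of_nonneg_left h2 (by positivity)
  have hDm : ∀ i, D (m i) ≤ 2 * (1 / 2) ^ i * m i := by
    intro i
    cases i with
    | zero => simp [hD, hm0]
    | succ j =>
      have hE2 : D (m (j + 1)) ≤ D (m j) + C (j + 1) (m (j + 1)) := by
        have := E2 j (m (j + 1)) le_rfl
        push_cast [hD, hC]
        exact_mod_cast this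
      have h1 : D (m j) ≤ (m j : ℝ) := by
        simp only [hD]
        exact_mod_cast (Finset.card_filter_le _ _).trans_eq (Finset.card_range _)
      have h2 : C (j + 1) (m (j + 1)) ≤ (1 / 2) ^ (j + 1) * m (j + 1) := by
        apply hCbound
        exact le_trans (hTS (j + 1) (j + 2) (by omega)) (hmS j)
      calc D (m (j + 1)) ≤ (m j : ℝ) + (1 / 2) ^ (j + 1) * m (j + 1) :=
            hE2.trans (add_le_add h1 h2)
        _ ≤ (1 / 2) ^ (j + 1) * m (j + 1) + (1 / 2) ^ (j + 1) * m (j + 1) :=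
            add_le_add_left (hmhalf j) _
        _ = 2 * (1 / 2) ^ (j + 1) * m (j + 1) := by ring
  have hDn : ∀ j, 1 ≤ j → ∀ n, m j ≤ n → n < m (j + 1) → D n ≤ 3 * (1 / 2) ^ j * n := by
    intro j hj n h1 h2
    have hE2 : D n ≤ D (m j) + C (j + 1) n := by
      have := E2 j n h2.le
      push_cast [hD, hC]
      exact_mod_cast this
    have hTn : T (j + 1) ≤ n := by
      obtain ⟨j', rfl⟩ : ∃ j', j = j' + 1 := ⟨j - 1, by omega⟩
      exact le_trans (le_trans (hTS (j' + 2) (j' + 2) le_rfl) (hmS j')) h1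
    have hCn : C (j + 1) n ≤ (1 / 2) ^ (j + 1) * n := hCbound _ _ hTn
    have hmn : (m j : ℝ) ≤ n := by exact_mod_cast h1
    have hpow : ((1 : ℝ) / 2) ^ (j + 1) ≤ (1 / 2) ^ j :=
      pow_le_pow_of_le_one (by norm_num) (by norm_num) (Nat.le_succ _)
    have hnn : (0 : ℝ) ≤ n := Nat.cast_nonneg _
    calc D n ≤ 2 * (1 / 2) ^ j * m j + (1 / 2) ^ (j + 1) * n := hE2.trans (add_le_add (hDm j) hCn)
      _ ≤ 2 * (1 / 2) ^ j * n + (1 / 2) ^ j * n := by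
          apply add_le_add
          · exact mul_le_mul_of_nonneg_left hmn (by positivity)
          · exact mul_le_mul_of_nonneg_right hpow hnn
      _ = 3 * (1 / 2) ^ j * n := by ring
  -- blocks
  have hblocks : ∀ i ≥ 1, Js ∩ Set.Ico (m (i - 1)) (m i) = J i ∩ Set.Ico (m (i - 1)) (m i) := by
    intro i hi
    obtain ⟨k, rfl⟩ : ∃ k, i = k + 1 := ⟨i - 1, by omega⟩
    simp only [Nat.add_sub_cancel]
    ext x
    simp only [Set.mem_inter_iff, Set.mem_Ico]
    constructor
    · rintro ⟨hx, h1, h2⟩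
      exact ⟨E1 x k hx h1 h2, h1, h2⟩
    · rintro ⟨hx, h1, h2⟩
      exact ⟨(hmemJs x).mpr ⟨k, hx, h1, h2⟩, h1, h2⟩
  -- density zero
  have hdens : Tendsto (fun n => D n / n) atTop (nhds 0) := by
    rw [Metric.tendsto_atTop]
    intro ε hε
    obtain ⟨i0, hi0⟩ := exists_pow_lt_of_lt_one (show (0 : ℝ) < ε / 3 by linarith)
      (show (1 : ℝ) / 2 < 1 by norm_num)
    refine ⟨m (i0 + 1), fun n hn => ?_⟩
    obtain ⟨j, hj1, hj2⟩ := exists_block hmmono hm0 n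
    have hji : i0 + 1 ≤ j := by
      by_contra hc
      push_neg at hc
      have h' : m (j + 1) ≤ m (i0 + 1) := hmmono.monotone (by omega : j + 1 ≤ i0 + 1)
      exact absurd (le_trans h' hn) (not_le.mpr hj2)
    have hn0 : 0 < n := by
      have h1 : m 0 < m (i0 + 1) := hmmono (Nat.succ_pos i0)
      omega
    have hn0' : (0 : ℝ) < n := by exact_mod_cast hn0
    have hD0 : 0 ≤ D n := Nat.cast_nonneg _
    rw [Real.dist_eq, sub_zero, abs_of_nonneg (div_nonneg hD0 hn0'.le)]
    rw [div_lt_iff₀ hn0']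
    have hb : D n ≤ 3 * (1 / 2) ^ j * n := hDn j (by omega) n hj1 hj2
    have hpj : ((1 : ℝ) / 2) ^ j ≤ (1 / 2) ^ i0 :=
      pow_le_pow_of_le_one (by norm_num) (by norm_num) (by omega)
    calc D n ≤ 3 * (1 / 2) ^ j * n := hb
      _ ≤ 3 * (1 / 2) ^ i0 * n := by
          apply mul_le_mul_of_nonneg_right _ hn0'.le
          nlinarith
      _ < ε * n := by
          apply mul_lt_mul_of_pos_right _ hn0'
          linarith
  exact ⟨Js, m, hdens, hm0, hmmono,
    fun i hi => by obtain ⟨k, rfl⟩ : ∃ k, i = k + 1 := ⟨i - 1, by omega⟩; exact (hmspec k).1,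
    hblocks⟩

private lemma density_bounded (A : Set ℕ) :
    IsBoundedUnder (· ≤ ·) atTop
      (fun k => ((((Finset.range (k + 1)).filter (fun j => j ∈ A)).card : ℝ) / k)) := by
  apply isBoundedUnder_of
  refine ⟨2, fun k => ?_⟩
  rcases Nat.eq_zero_or_pos k with hk | hk
  · simp [hk]
  · have hk' : (0 : ℝ) < k := by exact_mod_cast hk
    rw [div_le_iff₀ hk']
    have h1 : ((Finset.range (k + 1)).filter (fun j => j ∈ A)).card ≤ k + 1 :=
      (Finset.card_filter_le _ _).trans_eq (Finset.card_range _)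
    have h2 : ((((Finset.range (k + 1)).filter (fun j => j ∈ A)).card : ℝ)) ≤ (k : ℝ) + 1 := by
      exact_mod_cast h1
    have hk1 : (1 : ℝ) ≤ k := by exact_mod_cast hk
    linarith

private lemma eventual_bound_of_tendsto {f : ℕ → ℝ} (i : ℕ)
    (hf : Tendsto f atTop (nhds 0)) : ∃ N, ∀ k ≥ N, f k < (1 / 2) ^ i := by
  have := hf.eventually_lt_const (show (0 : ℝ) < (1 / 2) ^ i by positivity)
  exact eventually_atTop.mp this

/-- Lemma 3.1: gluing a sequence of sets `J i` of asymptotically vanishing upper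
density into a single set `J` of density zero, block by block, with `m i` chosen
in prescribed infinite sets `R i`; when each `J i` has density zero one can take
`l i = i`. -/
theorem glue_density_zero_sets
    (J : ℕ → Set ℕ)
    (h : Tendsto
      (fun i => limsup
        (fun k => ((((Finset.range (k + 1)).filter (fun j => j ∈ J i)).card : ℝ) / k))
        atTop)
      atTop (nhds 0))
    (R : ℕ → Set ℕ) (hR : ∀ i, (R i).Infinite) :
    (∃ (Js : Set ℕ) (m l : ℕ → ℕ),
      Tendsto (fun n => (((Finset.range n).filter (fun j => j ∈ Js)).card : ℝ) / n)
        atTop (nhds 0) ∧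
      m 0 = 0 ∧ StrictMono m ∧ StrictMono l ∧
      (∀ i ≥ 1, m i ∈ R i) ∧
      (∀ i ≥ 1, Js ∩ Set.Ico (m (i - 1)) (m i) = J (l i) ∩ Set.Ico (m (i - 1)) (m i))) ∧
    ((∀ i, Tendsto (fun n => (((Finset.range n).filter (fun j => j ∈ J i)).card : ℝ) / n)
        atTop (nhds 0)) →
      ∃ (Js : Set ℕ) (m : ℕ → ℕ),
        Tendsto (fun n => (((Finset.range n).filter (fun j => j ∈ Js)).card : ℝ) / n)
          atTop (nhds 0) ∧
        m 0 = 0 ∧ StrictMono m ∧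
        (∀ i ≥ 1, m i ∈ R i) ∧
        (∀ i ≥ 1, Js ∩ Set.Ico (m (i - 1)) (m i) = J i ∩ Set.Ico (m (i - 1)) (m i))) := by
  constructor
  · -- part 1
    have h2 : ∀ i : ℕ, ∃ N, ∀ j ≥ N,
        limsup (fun k => ((((Finset.range (k + 1)).filter (fun j' => j' ∈ J j)).card : ℝ) / k))
          atTop < (1 / 2) ^ i :=
      fun i => eventual_bound_of_tendsto i h
    choose N hN using h2
    set l : ℕ → ℕ := fun i => Nat.rec (N 0) (fun i li => max (N (i + 1)) (li + 1)) i with hldef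
    have hlsucc : ∀ i, l (i + 1) = max (N (i + 1)) (l i + 1) := fun i => rfl
    have hlmono : StrictMono l := by
      apply strictMono_nat_of_lt_succ
      intro i
      rw [hlsucc]
      omega
    have hlN : ∀ i, N i ≤ l i := by
      intro i
      cases i with
      | zero => exact le_rfl
      | succ j => rw [hlsucc]; exact le_max_left _ _
    have hls : ∀ i, limsup
        (fun k => ((((Finset.range (k + 1)).filter (fun j' => j' ∈ J (l i))).card : ℝ) / k))
        atTop < (1 / 2) ^ i := fun i => hN i (l i) (hlN i)
    have hev : ∀ i, ∃ K, ∀ k ≥ K,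
        ((((Finset.range (k + 1)).filter (fun j' => j' ∈ J (l i))).card : ℝ) / k) < (1 / 2) ^ i :=
      fun i => eventually_atTop.mp (eventually_lt_of_limsup_lt (hls i) (density_bounded _))
    have hJ' : ∀ i : ℕ, ∃ T : ℕ, ∀ n ≥ T,
        (((Finset.range n).filter (fun j' => j' ∈ J (l i))).card : ℝ) ≤ (1 / 2) ^ i * n := by
      intro i
      obtain ⟨K, hK⟩ := hev i
      refine ⟨K + 2, fun n hn => ?_⟩
      set k := n - 1 with hk
      have hkn : k + 1 = n := by omega
      have hkpos : (0 : ℝ) < k := by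
        have : 1 ≤ k := by omega
        exact_mod_cast this
      have h3 := hK k (by omega)
      rw [div_lt_iff₀ hkpos, hkn] at h3
      have hkn' : (k : ℝ) ≤ n := by exact_mod_cast (by omega : k ≤ n)
      calc (((Finset.range n).filter (fun j' => j' ∈ J (l i))).card : ℝ)
          ≤ (1 / 2) ^ i * k := h3.le
        _ ≤ (1 / 2) ^ i * n := mul_le_mul_of_nonneg_left hkn' (by positivity)
    obtain ⟨Js, m, hd, hm0, hmm, hmR, hblk⟩ := master_glue (fun i => J (l i)) hJ' R hR
    exact ⟨Js, m, l, hd, hm0, hmm, hlmono, hmR, hblk⟩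
  · -- part 2
    intro hd
    have hJ' : ∀ i : ℕ, ∃ T : ℕ, ∀ n ≥ T,
        (((Finset.range n).filter (fun j' => j' ∈ J i)).card : ℝ) ≤ (1 / 2) ^ i * n := by
      intro i
      obtain ⟨K, hK⟩ := eventual_bound_of_tendsto i (hd i)
      refine ⟨K + 1, fun n hn => ?_⟩
      have hnpos : (0 : ℝ) < n := by
        have : 1 ≤ n := by omega
        exact_mod_cast this
      have h3 := hK n (by omega)
      rw [div_lt_iff₀ hnpos] at h3
      exact h3.le
    exact master_glue J hJ' R hR
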